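/- arXiv:2003.10305 — 4 statements merged into one kernel-verified Lean document; each statement's English description precedes it below -/
import Mathlib

section
/- Let K be a field of characteristic zero, L a Lie algebra over K, and M a Lie module over L which is finite-dimensional as a K-vector space. Suppose h, e, f ∈ L form an sl₂-triple, i.e. ⁅h, e⁆ = 2·e, ⁅h, f⁆ = −2·f, and ⁅e, f⁆ = h. If m ∈ M satisfies ⁅e, m⁆ = 0 and ⁅h, m⁆ = 0, then ⁅f, m⁆ = 0. -/
/-- If `(h, e, f)` is an `sl₂`-triple in a Lie algebra `L` over a field of
characteristic zero, and `m` is a vector of a finite-dimensional Lie module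
annihilated by `e` and of `h`-weight zero, then `m` is also annihilated by `f`. -/
theorem stmt_6 (K : Type*) [Field K] [CharZero K]
    (L : Type*) [LieRing L] [LieAlgebra K L]
    (M : Type*) [AddCommGroup M] [Module K M] [LieRingModule L M] [LieModule K L M]
    [FiniteDimensional K M]
    (h e f : L)
    (hhe : ⁅h, e⁆ = (2 : K) • e) (hhf : ⁅h, f⁆ = (-2 : K) • f) (hef : ⁅e, f⁆ = h)
    (m : M) (hem : ⁅e, m⁆ = 0) (hhm : ⁅h, m⁆ = 0) :
    ⁅f, m⁆ = 0 := by
  rcases eq_or_ne h 0 with rfl | hh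
  · have hf : f = 0 := by
      have h0 : (-2 : K) • f = 0 := by rw [← hhf, zero_lie]
      rcases smul_eq_zero.mp h0 with h' | h'
      · norm_num at h'
      · exact h'
    simp [hf]
  · rcases eq_or_ne m 0 with rfl | hm
    · simp
    · have t : IsSl2Triple h e f :=
        { h_ne_zero := hh
          lie_e_f := hef
          lie_h_e_nsmul := by rw [hhe]; module
          lie_h_f_nsmul := by rw [hhf]; module }
      have P : t.HasPrimitiveVectorWith m (0 : K) :=
        { ne_zero := hm
          lie_h := by simp [hhm]
          lie_e := hem }
      have key := P.pow_toEnd_f_eq_zero_of_eq_nat (n := 0) (by simp)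
      simpa using key
end

section
/- Let R be a commutative ring in which 2 is invertible, Ω an R-module, and δ : R → Ω a derivation (an additive map satisfying δ(a·b) = a • δ(b) + b • δ(a)). Let N ≥ 1 and let P be an N×N matrix over R with P·P = P. In the exterior algebra Λ(Ω) over R, let dP denote the N×N matrix with entries ι(δ(P_{ij})), where ι : Ω → Λ(Ω) is the canonical inclusion of degree-one elements. Then trace(dP · dP · dP) = 0, where the product is matrix multiplication over the (noncommutative) ring Λ(Ω). -/
private lemma trace_mul_comm_aux {n : Type*} [Fintype n] {S : Type*} [Ring S]
    (A B : Matrix n n S) (h : ∀ i j k l, Commute (B i j) (A k l)) :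
    (A * B).trace = (B * A).trace := by
  simp only [Matrix.trace, Matrix.diag, Matrix.mul_apply]
  rw [Finset.sum_comm]
  exact Finset.sum_congr rfl fun i _ => Finset.sum_congr rfl fun j _ => (h i j j i).symm

/-- For an idempotent matrix `P` over a commutative ring `R` in which `2` is
invertible, and a derivation `δ : R → Ω`, the matrix `dP` with entries
`ι (δ (P i j))` in the exterior algebra `Λ(Ω)` satisfies
`trace (dP * dP * dP) = 0`. -/
theorem stmt_9 (R : Type*) [CommRing R] [Invertible (2 : R)]
    (Ω : Type*) [AddCommGroup Ω] [Module R Ω]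
    (δ : R → Ω) (hadd : ∀ a b, δ (a + b) = δ a + δ b)
    (hleib : ∀ a b, δ (a * b) = a • δ b + b • δ a)
    (N : ℕ) (hN : 1 ≤ N)
    (P : Matrix (Fin N) (Fin N) R) (hP : P * P = P)
    (dP : Matrix (Fin N) (Fin N) (ExteriorAlgebra R Ω))
    (hdP : ∀ i j, dP i j = ExteriorAlgebra.ι R (δ (P i j))) :
    (dP * dP * dP).trace = 0 := by
  set Q : Matrix (Fin N) (Fin N) (ExteriorAlgebra R Ω) :=
    P.map (algebraMap R (ExteriorAlgebra R Ω)) with hQdef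
  set δ' : R →+ Ω := AddMonoidHom.mk' δ hadd with hδ'
  -- Q is idempotent
  have hQ : Q * Q = Q := by
    rw [hQdef, ← Matrix.map_mul, hP]
  -- dP = Q * dP + dP * Q
  have key : Q * dP + dP * Q = dP := by
    ext i k
    have h1 : dP i k = ExteriorAlgebra.ι R (δ ((P * P) i k)) := by rw [hP, hdP]
    rw [Matrix.add_apply, Matrix.mul_apply, Matrix.mul_apply, h1, Matrix.mul_apply]
    rw [show δ (∑ j, P i j * P j k) = ∑ j, δ (P i j * P j k) by
      exact map_sum δ' (fun j => P i j * P j k) Finset.univ]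
    rw [map_sum]
    rw [show (∑ j, ExteriorAlgebra.ι R (δ (P i j * P j k)))
        = ∑ j, ((P i j) • ExteriorAlgebra.ι R (δ (P j k))
            + (P j k) • ExteriorAlgebra.ι R (δ (P i j))) by
      refine Finset.sum_congr rfl fun j _ => ?_
      rw [hleib, map_add, map_smul, map_smul]]
    rw [Finset.sum_add_distrib]
    congr 1
    · refine Finset.sum_congr rfl fun j _ => ?_
      rw [hQdef, Matrix.map_apply, hdP, Algebra.smul_def]
    · refine Finset.sum_congr rfl fun j _ => ?_
      rw [hQdef, Matrix.map_apply, hdP, Algebra.smul_def, Algebra.commutes]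
  have hQdP : Q * dP = dP - dP * Q := eq_sub_of_add_eq key
  -- J := 2Q - 1
  set J : Matrix (Fin N) (Fin N) (ExteriorAlgebra R Ω) := 2 • Q - 1 with hJdef
  have hJ2 : J * J = 1 := by
    rw [hJdef]
    have : ((2:ℕ) • Q - 1) * ((2:ℕ) • Q - 1) = 4 • (Q * Q) - 4 • Q + 1 := by
      push_cast
      noncomm_ring
    rw [this, hQ]
    abel
  have hanti : J * dP = -(dP * J) := by
    rw [hJdef, Matrix.sub_mul, Matrix.mul_sub, Matrix.one_mul, Matrix.mul_one,
      Matrix.smul_mul, Matrix.mul_smul, hQdP]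
    module
  set A : Matrix (Fin N) (Fin N) (ExteriorAlgebra R Ω) := dP * dP * dP with hA
  have hantiA : J * A = -(A * J) := by
    rw [hA]
    calc J * (dP * dP * dP) = (J * dP) * dP * dP := by noncomm_ring
    _ = (-(dP * J)) * dP * dP := by rw [hanti]
    _ = -(dP * ((J * dP) * dP)) := by noncomm_ring
    _ = -(dP * ((-(dP * J)) * dP)) := by rw [hanti]
    _ = dP * (dP * (J * dP)) := by noncomm_ring
    _ = dP * (dP * (-(dP * J))) := by rw [hanti]
    _ = -(dP * dP * dP * J) := by noncomm_ring
  -- J entries commute with everything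
  have hcomm : ∀ (M : Matrix (Fin N) (Fin N) (ExteriorAlgebra R Ω)) (i j k l : Fin N),
      Commute (J i j) (M k l) := by
    intro M i j k l
    have : J i j = algebraMap R (ExteriorAlgebra R Ω)
        (2 * P i j - (if i = j then 1 else 0)) := by
      rw [hJdef]
      simp only [Matrix.sub_apply, Matrix.smul_apply, Matrix.one_apply, hQdef,
        Matrix.map_apply, map_sub, map_mul, map_ofNat, two_smul, two_mul]
      split <;> simp
    rw [this]
    exact Algebra.commutes _ _
  -- trace A = - trace A
  have h1 : A.trace = (J * (J * A)).trace := by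
    rw [← Matrix.mul_assoc, hJ2, Matrix.one_mul]
  have h2 : (J * (J * A)).trace = ((J * A) * J).trace :=
    (trace_mul_comm_aux (J * A) J (fun i j k l => hcomm _ i j k l)).symm
  have h3 : ((J * A) * J).trace = -A.trace := by
    rw [hantiA, Matrix.neg_mul, Matrix.mul_assoc, hJ2, Matrix.mul_one, Matrix.trace_neg]
  have hfin : A.trace = -A.trace := h1.trans (h2.trans h3)
  have hadd0 : A.trace + A.trace = 0 := by
    nth_rewrite 1 [hfin]; abel
  have h2t : (2 : R) • A.trace = 0 := by rw [two_smul]; exact hadd0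
  calc A.trace = ((⅟(2:R)) * 2) • A.trace := by rw [invOf_mul_self, one_smul]
  _ = (⅟(2:R)) • ((2:R) • A.trace) := by rw [mul_smul]
  _ = 0 := by rw [h2t, smul_zero]
end

section
/- Let R be a commutative ring, Ω an R-module, and δ₁, δ₂ : R → Ω two derivations; set δ := δ₁ + δ₂. Let N ≥ 1 and let u, v : {1,…,N} → R satisfy Σ_k u_k · v_k = 1, δ₂(u_k) = 0 and δ₁(v_k) = 0 for all k. Define P_{ij} := u_i · v_j. Then in the exterior algebra Λ(Ω) over R one has Σ_{i,j,k} algebraMap(P_{ij}) · ι(δ(P_{jk})) · ι(δ(P_{ki})) = Σ_{i,j} ι(δ₂(P_{ij})) · ι(δ₁(P_{ji})), where ι : Ω → Λ(Ω) is the canonical inclusion of degree-one elements and algebraMap : R → Λ(Ω) the inclusion of scalars. -/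
open Finset

lemma aux_sum {R A : Type*} [CommRing R] [Ring A] [Algebra R A] {N : ℕ}
    (cu cv : Fin N → R) (a b : Fin N → A)
    (h1 : ∑ k, cu k * cv k = 1)
    (hS : ∑ k, cv k • a k = 0) (hT : ∑ k, cu k • b k = 0) :
    ∑ i, ∑ j, ∑ k,
        (cu i * cv j) • ((cv k • a j + cu j • b k) * (cv i • a k + cu k • b i))
      = ∑ i, ∑ j, (cu i • b j) * (cv i • a j) := by
  have expand : ∀ i j k : Fin N,
      (cu i * cv j) • ((cv k • a j + cu j • b k) * (cv i • a k + cu k • b i))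
        = (cu i * cv i) • ((cv j • a j) * (cv k • a k))
          + (cu k * cv k) • ((cv j • a j) * (cu i • b i))
          + ((cu i * cv i) • ((cu j * cv j) • (b k * a k))
          + (cu j * cv j) • ((cu k • b k) * (cu i • b i))) := by
    intro i j k
    simp only [mul_add, add_mul, smul_add, smul_mul_assoc, mul_smul_comm, smul_smul]
    module
  calc ∑ i, ∑ j, ∑ k,
        (cu i * cv j) • ((cv k • a j + cu j • b k) * (cv i • a k + cu k • b i))
      = ∑ i, ∑ j, ∑ k,
          ((cu i * cv i) • ((cv j • a j) * (cv k • a k))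
          + (cu k * cv k) • ((cv j • a j) * (cu i • b i))
          + ((cu i * cv i) • ((cu j * cv j) • (b k * a k))
          + (cu j * cv j) • ((cu k • b k) * (cu i • b i)))) := by
        simp only [expand]
    _ = ∑ k, b k * a k := by
        simp only [Finset.sum_add_distrib]
        rw [show ∑ i : Fin N, ∑ j : Fin N, ∑ k : Fin N,
              (cu i * cv i) • ((cv j • a j) * (cv k • a k)) = 0 by
            simp only [← Finset.smul_sum, ← Finset.mul_sum, hS, mul_zero, smul_zero,
              Finset.sum_const_zero]]
        rw [show ∑ i : Fin N, ∑ j : Fin N, ∑ k : Fin N,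
              (cu k * cv k) • ((cv j • a j) * (cu i • b i)) = 0 by
            simp only [← Finset.sum_smul, h1, one_smul]
            simp only [← Finset.sum_mul, hS, zero_mul, Finset.sum_const_zero]]
        rw [show ∑ i : Fin N, ∑ j : Fin N, ∑ k : Fin N,
              (cu j * cv j) • ((cu k • b k) * (cu i • b i)) = 0 by
            simp only [← Finset.smul_sum, ← Finset.sum_mul, hT, zero_mul, smul_zero,
              Finset.sum_const_zero]]
        simp only [zero_add, add_zero]
        simp only [← Finset.smul_sum]
        simp only [← Finset.sum_smul, h1, one_smul]
    _ = ∑ i, ∑ j, (cu i • b j) * (cv i • a j) := by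
        simp only [smul_mul_assoc, mul_smul_comm, smul_smul]
        simp only [← Finset.smul_sum]
        simp only [← Finset.sum_smul, h1, one_smul]
        have h1' : ∑ i : Fin N, cv i * cu i = 1 := by
          rw [← h1]; exact Finset.sum_congr rfl fun k _ => mul_comm _ _
        rw [h1', one_smul]



/-- For `P i j = u i * v j` with `Σ u k * v k = 1`, and derivations `δ₁`, `δ₂`
with `δ₂ (u k) = 0`, `δ₁ (v k) = 0`, setting `δ = δ₁ + δ₂`, one has the identity
`Σ_{i,j,k} P̂ i j · ι(δ (P j k)) · ι(δ (P k i)) = Σ_{i,j} ι(δ₂ (P i j)) · ι(δ₁ (P j i))`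
in the exterior algebra `Λ(Ω)` (i.e. `Tr(P dP ∧ dP) = Tr(∂̄P ∧ ∂P)`). -/
theorem stmt_12 (R : Type*) [CommRing R]
    (Ω : Type*) [AddCommGroup Ω] [Module R Ω]
    (δ₁ δ₂ : R → Ω)
    (hadd₁ : ∀ a b, δ₁ (a + b) = δ₁ a + δ₁ b)
    (hleib₁ : ∀ a b, δ₁ (a * b) = a • δ₁ b + b • δ₁ a)
    (hadd₂ : ∀ a b, δ₂ (a + b) = δ₂ a + δ₂ b)
    (hleib₂ : ∀ a b, δ₂ (a * b) = a • δ₂ b + b • δ₂ a)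
    (δ : R → Ω) (hδ : ∀ a, δ a = δ₁ a + δ₂ a)
    (N : ℕ) (hN : 1 ≤ N) (u v : Fin N → R)
    (huv : ∑ k, u k * v k = 1)
    (hu : ∀ k, δ₂ (u k) = 0) (hv : ∀ k, δ₁ (v k) = 0)
    (P : Fin N → Fin N → R) (hP : ∀ i j, P i j = u i * v j) :
    ∑ i : Fin N, ∑ j : Fin N, ∑ k : Fin N,
        algebraMap R (ExteriorAlgebra R Ω) (P i j) *
          ExteriorAlgebra.ι R (δ (P j k)) * ExteriorAlgebra.ι R (δ (P k i))
      = ∑ i : Fin N, ∑ j : Fin N,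
          ExteriorAlgebra.ι R (δ₂ (P i j)) * ExteriorAlgebra.ι R (δ₁ (P j i)) := by
  set a : Fin N → ExteriorAlgebra R Ω := fun j => ExteriorAlgebra.ι R (δ₁ (u j)) with ha
  set b : Fin N → ExteriorAlgebra R Ω := fun j => ExteriorAlgebra.ι R (δ₂ (v j)) with hb
  have hd1 : ∀ j k, δ₁ (P j k) = v k • δ₁ (u j) := by
    intro j k; rw [hP, hleib₁, hv, smul_zero, zero_add]
  have hd2 : ∀ j k, δ₂ (P j k) = u j • δ₂ (v k) := by
    intro j k; rw [hP, hleib₂, hu, smul_zero, add_zero]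
  have hι : ∀ j k, ExteriorAlgebra.ι R (δ (P j k)) = v k • a j + u j • b k := by
    intro j k
    rw [hδ, hd1, hd2, map_add, map_smul, map_smul]
  have hone₁ : δ₁ (1 : R) = 0 := by
    have h := hleib₁ 1 1
    simp only [mul_one, one_smul] at h
    exact (left_eq_add.mp h)
  have hone₂ : δ₂ (1 : R) = 0 := by
    have h := hleib₂ 1 1
    simp only [mul_one, one_smul] at h
    exact (left_eq_add.mp h)
  have hS : ∑ k, v k • a k = 0 := by
    have : ∑ k, v k • δ₁ (u k) = 0 := by
      have : ∑ k, v k • δ₁ (u k) = ∑ k, δ₁ (u k * v k) := by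
        refine Finset.sum_congr rfl fun k _ => ?_
        rw [hleib₁, hv, smul_zero, zero_add]
      rw [this,
        show ∑ k : Fin N, δ₁ (u k * v k) = δ₁ (∑ k : Fin N, u k * v k) from
          (map_sum (AddMonoidHom.mk' δ₁ hadd₁) _ _).symm, huv, hone₁]
    calc ∑ k, v k • a k = ExteriorAlgebra.ι R (∑ k, v k • δ₁ (u k)) := by
          rw [map_sum]; exact Finset.sum_congr rfl fun k _ => (map_smul _ _ _).symm
      _ = 0 := by rw [this, map_zero]
  have hT : ∑ k, u k • b k = 0 := by
    have : ∑ k, u k • δ₂ (v k) = 0 := by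
      have : ∑ k, u k • δ₂ (v k) = ∑ k, δ₂ (u k * v k) := by
        refine Finset.sum_congr rfl fun k _ => ?_
        rw [hleib₂, hu, smul_zero, add_zero]
      rw [this,
        show ∑ k : Fin N, δ₂ (u k * v k) = δ₂ (∑ k : Fin N, u k * v k) from
          (map_sum (AddMonoidHom.mk' δ₂ hadd₂) _ _).symm, huv, hone₂]
    calc ∑ k, u k • b k = ExteriorAlgebra.ι R (∑ k, u k • δ₂ (v k)) := by
          rw [map_sum]; exact Finset.sum_congr rfl fun k _ => (map_smul _ _ _).symm
      _ = 0 := by rw [this, map_zero]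
  calc ∑ i : Fin N, ∑ j : Fin N, ∑ k : Fin N,
        algebraMap R (ExteriorAlgebra R Ω) (P i j) *
          ExteriorAlgebra.ι R (δ (P j k)) * ExteriorAlgebra.ι R (δ (P k i))
      = ∑ i, ∑ j, ∑ k,
          (u i * v j) • ((v k • a j + u j • b k) * (v i • a k + u k • b i)) := by
        refine Finset.sum_congr rfl fun i _ => Finset.sum_congr rfl fun j _ =>
          Finset.sum_congr rfl fun k _ => ?_
        rw [hι, hι, hP, mul_assoc, ← Algebra.smul_def]
    _ = ∑ i, ∑ j, (u i • b j) * (v i • a j) :=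
        aux_sum u v a b huv hS hT
    _ = ∑ i : Fin N, ∑ j : Fin N,
          ExteriorAlgebra.ι R (δ₂ (P i j)) * ExteriorAlgebra.ι R (δ₁ (P j i)) := by
        refine Finset.sum_congr rfl fun i _ => Finset.sum_congr rfl fun j _ => ?_
        rw [hd2, hd1, map_smul, map_smul]
end

section
/- Let k be a commutative ring, A an associative unital k-algebra, σ : A → A a k-algebra automorphism, N ≥ 1, and P an N×N matrix over A with P·P = P. Suppose q : {1,…,N} → kˣ is a family of invertible scalars such that σ(P_{ij}) = (q_i · q_j⁻¹) • P_{ij} for all i, j. Then in A ⊗_k A the following identity holds: Σ_{i,j,l} q_i • [ ((2P−1)_{ij} · P_{jl}) ⊗ P_{li} − (2P−1)_{ij} ⊗ (P_{jl} · P_{li}) + (σ(P_{li}) · (2P−1)_{ij}) ⊗ P_{jl} ] = 1 ⊗ (Σ_i q_i • P_{ii}), where (2P−1)_{ij} := 2·P_{ij} − δ_{ij}·1. In other words, the σ-twisted Hochschild boundary b_σ(a₀⊗a₁⊗a₂) = a₀a₁⊗a₂ − a₀⊗a₁a₂ + σ(a₂)a₀⊗a₁ applied to the 2-chain C_q(P)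 := Σ_{i,j,l} q_i • ((2P−1)_{ij} ⊗ P_{jl} ⊗ P_{li}) equals 1 ⊗ Tr_q(P), where Tr_q(P) := Σ_i q_i • P_{ii} is the q-weighted trace. -/
open TensorProduct

/-- The σ-twisted Hochschild boundary of the quantum-trace Chern-character 2-chain
`C_q(P) = Σ q_i • ((2P−1)_{ij} ⊗ P_{jl} ⊗ P_{li})` of an idempotent matrix `P`
satisfying `σ (P i j) = (q i / q j) • P i j` equals `1 ⊗ Tr_q(P)` in `A ⊗[k] A`. -/
theorem stmt_14 (k : Type*) [CommRing k] (A : Type*) [Ring A] [Algebra k A]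
    (σ : A ≃ₐ[k] A)
    (N : ℕ) (hN : 1 ≤ N)
    (P : Matrix (Fin N) (Fin N) A) (hP : P * P = P)
    (q : Fin N → kˣ)
    (hσ : ∀ i j, σ (P i j) = ((q i * (q j)⁻¹ : kˣ) : k) • P i j)
    (Q : Matrix (Fin N) (Fin N) A) (hQ : Q = 2 • P - 1) :
    ∑ i, ∑ j, ∑ l,
        (q i : k) •
          ((Q i j * P j l) ⊗ₜ[k] P l i
            - Q i j ⊗ₜ[k] (P j l * P l i)
            + (σ (P l i) * Q i j) ⊗ₜ[k] P j l)
      = (1 : A) ⊗ₜ[k] (∑ i, (q i : k) • P i i) := by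
  have hQP : Q * P = P := by
    subst hQ
    rw [sub_mul, one_mul, smul_mul_assoc, hP, two_smul]
    abel
  have hPQ : P * Q = P := by
    subst hQ
    rw [mul_sub, mul_one, mul_smul_comm, hP, two_smul]
    abel
  -- split the triple sum into three triple sums
  simp only [smul_sub, smul_add, Finset.sum_sub_distrib, Finset.sum_add_distrib]
  -- the first triple sum
  have hS1 : (∑ i, ∑ j, ∑ l, (q i : k) • ((Q i j * P j l) ⊗ₜ[k] P l i))
      = ∑ i, ∑ l, (q i : k) • (P i l ⊗ₜ[k] P l i) := by
    refine Finset.sum_congr rfl fun i _ => ?_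
    rw [Finset.sum_comm]
    refine Finset.sum_congr rfl fun l _ => ?_
    rw [← Finset.smul_sum, ← sum_tmul, ← Matrix.mul_apply, hQP]
  -- the second triple sum
  have hS2 : (∑ i, ∑ j, ∑ l, (q i : k) • (Q i j ⊗ₜ[k] (P j l * P l i)))
      = ∑ i, ∑ j, (q i : k) • (Q i j ⊗ₜ[k] P j i) := by
    refine Finset.sum_congr rfl fun i _ => Finset.sum_congr rfl fun j _ => ?_
    rw [← Finset.smul_sum, ← tmul_sum, ← Matrix.mul_apply, hP]
  -- the third triple sum
  have key3 : ∀ i l j : Fin N, (q i : k) • ((σ (P l i) * Q i j) ⊗ₜ[k] P j l)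
      = (q l : k) • ((P l i * Q i j) ⊗ₜ[k] P j l) := by
    intro i l j
    rw [hσ, smul_mul_assoc, smul_tmul', smul_smul]
    congr 1
    rw [Units.val_mul, mul_comm ((q l : kˣ) : k), ← mul_assoc, Units.mul_inv, one_mul]
  have hS3 : (∑ i, ∑ j, ∑ l, (q i : k) • ((σ (P l i) * Q i j) ⊗ₜ[k] P j l))
      = ∑ i, ∑ l, (q i : k) • (P i l ⊗ₜ[k] P l i) := by
    simp only [key3]
    rw [Finset.sum_comm]
    refine Eq.trans (Finset.sum_congr rfl fun j _ => Finset.sum_comm) ?_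
    rw [Finset.sum_comm]
    refine Finset.sum_congr rfl fun l _ => Finset.sum_congr rfl fun j _ => ?_
    rw [← Finset.smul_sum, ← sum_tmul, ← Matrix.mul_apply, hPQ]
  rw [hS1, hS2, hS3]
  -- expand Q = 2P - 1 in the middle sum
  have hS2' : (∑ i, ∑ j, (q i : k) • (Q i j ⊗ₜ[k] P j i))
      = 2 • (∑ i, ∑ j, (q i : k) • (P i j ⊗ₜ[k] P j i))
          - ∑ i, (q i : k) • ((1 : A) ⊗ₜ[k] P i i) := by
    subst hQ
    simp only [Matrix.sub_apply, Matrix.smul_apply, Matrix.one_apply, sub_tmul,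
      smul_tmul', smul_sub, Finset.sum_sub_distrib, Finset.smul_sum, ite_tmul,
      smul_ite, smul_zero, Finset.sum_ite_eq, Finset.mem_univ, if_true]
    congr 1
    refine Finset.sum_congr rfl fun i _ => Finset.sum_congr rfl fun j _ => ?_
    rw [smul_comm]
  rw [hS2']
  have hD : (∑ i, (q i : k) • ((1 : A) ⊗ₜ[k] P i i))
      = (1 : A) ⊗ₜ[k] (∑ i, (q i : k) • P i i) := by
    rw [tmul_sum]
    exact Finset.sum_congr rfl fun i _ => (tmul_smul _ _ _).symm
  rw [← hD]
  abel
end
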